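/- Let W, U, V, Z be finitely-valued random variables such that W − U − Z and U − W − (V,Z) are Markov chains. Let U₀ be the zero-information random variable of W with respect to P_{Z|W}. Then I(W; V | U) ≤ I(W; V | U₀). -/

import Mathlib

open Finset

section PD
variable {Ω α β γ : Type*}

open Classical in
/-- Pushforward distribution of `p` under the random variable `f`. -/
noncomputable def push [Fintype Ω] (p : Ω → ℝ) (f : Ω → α) : α → ℝ :=
  fun a => ∑ ω, if f ω = a then p ω else 0

/-- Shannon entropy (base 2) of a pmf on a finite alphabet. -/
noncomputable def ent [Fintype α] (q : α → ℝ) : ℝ := -∑ a, q a * Real.logb 2 (q a)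

/-- Entropy of a random variable `f` under the distribution `p` on the sample space. -/
noncomputable def H [Fintype Ω] [Fintype α] (p : Ω → ℝ) (f : Ω → α) : ℝ := ent (push p f)

/-- Conditional entropy `H(f | g)`. -/
noncomputable def condH [Fintype Ω] [Fintype α] [Fintype β] (p : Ω → ℝ) (f : Ω → α) (g : Ω → β) : ℝ :=
  H p (fun ω => (f ω, g ω)) - H p g

/-- Mutual information `I(f ; g)`. -/
noncomputable def mi [Fintype Ω] [Fintype α] [Fintype β] (p : Ω → ℝ) (f : Ω → α) (g : Ω → β) : ℝ :=
  H p f + H p g - H p (fun ω => (f ω, g ω))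

/-- Conditional mutual information `I(f ; g | h)`. -/
noncomputable def cmi [Fintype Ω] [Fintype α] [Fintype β] [Fintype γ]
    (p : Ω → ℝ) (f : Ω → α) (g : Ω → β) (h : Ω → γ) : ℝ :=
  condH p f h + condH p g h - condH p (fun ω => (f ω, g ω)) h

/-- `p` is a probability mass function. -/
def IsProb [Fintype Ω] (p : Ω → ℝ) : Prop := (∀ ω, 0 ≤ p ω) ∧ ∑ ω, p ω = 1

/-- Markov chain `f − g − h`: conditional independence of `f` and `h` given `g`,
expressed as `P(a,b,c)·P(b) = P(a,b)·P(b,c)`. -/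
def Markov [Fintype Ω] (p : Ω → ℝ) (f : Ω → α) (g : Ω → β) (h : Ω → γ) : Prop :=
  ∀ a b c, push p (fun ω => (f ω, g ω, h ω)) (a, b, c) * push p g b =
    push p (fun ω => (f ω, g ω)) (a, b) * push p (fun ω => (g ω, h ω)) (b, c)

open Classical in
/-- Kullback–Leibler divergence (base 2), with the sum restricted to the support of `P`. -/
noncomputable def KL [Fintype α] (P Q : α → ℝ) : ℝ :=
  ∑ a, if 0 < P a then P a * Real.logb 2 (P a / Q a) else 0

end PD

/-- The zero-information equivalence: `w₁ ∼ w₂` iff the conditional laws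
`c w₁ = P_{Z|W}(·|w₁)` and `c w₂` coincide. -/
def zeroInfoSetoid {W Z : Type*} (c : W → Z → ℝ) : Setoid W :=
  ⟨fun w₁ w₂ => ∀ z, c w₁ z = c w₂ z,
   ⟨fun _ _ => rfl, fun h z => (h z).symm, fun h₁ h₂ z => (h₁ z).trans (h₂ z)⟩⟩

noncomputable instance {α : Type*} [Fintype α] (s : Setoid α) : Fintype (Quotient s) := by
  classical exact Quotient.fintype s


section Lemmas
set_option linter.unusedSectionVars false
variable {Ω α β γ δ : Type*} [Fintype Ω] [Fintype α] [Fintype β] [Fintype γ] [Fintype δ]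
open Classical

lemma push_nonneg {p : Ω → ℝ} (hp : ∀ ω, 0 ≤ p ω) (f : Ω → α) (a : α) : 0 ≤ push p f a :=
  Finset.sum_nonneg fun ω _ => by by_cases h : f ω = a <;> simp [push, h, hp ω]

lemma le_push {p : Ω → ℝ} (hp : ∀ ω, 0 ≤ p ω) (f : Ω → α) (ω : Ω) : p ω ≤ push p f (f ω) := by
  have h := Finset.single_le_sum (f := fun ω' => if f ω' = f ω then p ω' else 0)
    (fun i _ => by by_cases h : f i = f ω <;> simp [h, hp i]) (Finset.mem_univ ω)
  simpa [push] using h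

lemma push_comp (p : Ω → ℝ) (f : Ω → α) (φ : α → β) (b : β) :
    push p (fun ω => φ (f ω)) b = push (push p f) φ b := by
  simp only [push]
  rw [Finset.sum_congr rfl (fun x _ => show (if φ x = b then ∑ ω, if f ω = x then p ω else 0 else 0)
      = ∑ ω, if f ω = x ∧ φ x = b then p ω else 0 by split <;> simp_all),
    Finset.sum_comm]
  apply Finset.sum_congr rfl
  intro ω _
  rw [Finset.sum_eq_single (f ω)]
  · simp
  · intro x _ hx; simp [Ne.symm hx]
  · simp

lemma push_comp_inj_apply (p : Ω → ℝ) {φ : α → β} (hφ : Function.Injective φ) (f : Ω → α) (a : α) :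
    push p (fun ω => φ (f ω)) (φ a) = push p f a := by
  simp only [push]
  exact Finset.sum_congr rfl fun ω _ => by rw [hφ.eq_iff]

lemma push_pair_fst (p : Ω → ℝ) (f : Ω → α) (g : Ω → β) (a : α) :
    push p f a = ∑ b, push p (fun ω => (f ω, g ω)) (a, b) := by
  simp only [push]
  rw [Finset.sum_comm]
  apply Finset.sum_congr rfl
  intro ω _
  by_cases h : f ω = a
  · simp [h, Prod.ext_iff, Finset.sum_ite_eq]
  · simp [h, Prod.ext_iff]

lemma push_pair_snd (p : Ω → ℝ) (f : Ω → α) (g : Ω → β) (b : β) :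
    push p g b = ∑ a, push p (fun ω => (f ω, g ω)) (a, b) := by
  simp only [push]
  rw [Finset.sum_comm]
  apply Finset.sum_congr rfl
  intro ω _
  by_cases h : g ω = b
  · simp [h, Prod.ext_iff, Finset.sum_ite_eq]
  · simp [h, Prod.ext_iff]

lemma push_congr {p : Ω → ℝ} {f g : Ω → α} (h : ∀ ω, p ω ≠ 0 → f ω = g ω) :
    push p f = push p g := by
  funext a
  apply Finset.sum_congr rfl
  intro ω _
  by_cases hp : p ω = 0
  · simp [hp]
  · rw [h ω hp]

lemma ent_push_inj {q : α → ℝ} {φ : α → β} (hφ : Function.Injective φ) :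
    ent (push q φ) = ent q := by
  unfold ent
  congr 1
  symm
  have h1 : ∀ a : α, push q φ (φ a) = q a := by
    intro a
    simp only [push]
    rw [Finset.sum_eq_single a]
    · simp
    · intro x _ hx; exact if_neg (fun h => hx (hφ h))
    · simp
  calc ∑ a, q a * Real.logb 2 (q a)
      = ∑ b ∈ Finset.univ.image φ, push q φ b * Real.logb 2 (push q φ b) := by
        rw [Finset.sum_image (fun x _ y _ h => hφ h)]
        exact Finset.sum_congr rfl fun a _ => by rw [h1 a]
    _ = ∑ b, push q φ b * Real.logb 2 (push q φ b) := by
        apply Finset.sum_subset (Finset.subset_univ _)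
        intro b _ hb
        have : push q φ b = 0 := by
          simp only [push]
          apply Finset.sum_eq_zero
          intro a _
          have : φ a ≠ b := fun h => hb (Finset.mem_image.2 ⟨a, Finset.mem_univ a, h⟩)
          simp [this]
        simp [this]

lemma H_comp_inj (p : Ω → ℝ) {φ : α → β} (hφ : Function.Injective φ) (f : Ω → α) :
    H p (fun ω => φ (f ω)) = H p f := by
  unfold H
  rw [show push p (fun ω => φ (f ω)) = push (push p f) φ from funext (push_comp p f φ)]
  exact ent_push_inj hφ

lemma logsum {ι : Type*} (S : Finset ι) (a b : ι → ℝ) (ha : ∀ i ∈ S, 0 ≤ a i)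
    (hab : ∀ i ∈ S, a i ≤ b i) :
    ∑ i ∈ S, a i * Real.logb 2 (b i / a i)
      ≤ (∑ i ∈ S, a i) * Real.logb 2 ((∑ i ∈ S, b i) / (∑ i ∈ S, a i)) := by
  have hb0 : ∀ i ∈ S, 0 ≤ b i := fun i hi => le_trans (ha i hi) (hab i hi)
  rcases eq_or_lt_of_le (Finset.sum_nonneg ha) with hA | hA
  · have hz : ∀ i ∈ S, a i = 0 := by
      intro i hi
      exact (Finset.sum_eq_zero_iff_of_nonneg ha).1 hA.symm i hi
    rw [Finset.sum_congr rfl (fun i hi => show a i * Real.logb 2 (b i / a i) = 0 by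
      rw [hz i hi]; simp), Finset.sum_const_zero, ← hA]
    simp
  · set A := ∑ i ∈ S, a i with hAdef
    set T := S.filter (fun i => 0 < a i) with hT
    have hTS : T ⊆ S := Finset.filter_subset _ _
    have haT : ∀ i ∈ T, 0 < a i := fun i hi => (Finset.mem_filter.1 hi).2
    have hsumT : ∑ i ∈ T, a i = A := by
      apply Finset.sum_subset hTS
      intro i hi hit
      have := ha i hi
      by_contra hne
      exact hit (Finset.mem_filter.2 ⟨hi, lt_of_le_of_ne this (Ne.symm hne)⟩)
    have hTne : T.Nonempty := by
      by_contra hemp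
      rw [Finset.not_nonempty_iff_eq_empty] at hemp
      rw [hemp, Finset.sum_empty] at hsumT
      exact absurd hsumT.symm (ne_of_gt hA)
    have hBT : 0 < ∑ i ∈ T, b i := by
      obtain ⟨j, hj⟩ := hTne
      refine lt_of_lt_of_le (lt_of_lt_of_le (haT j hj) (hab j (hTS hj))) ?_
      exact Finset.single_le_sum (fun i hi => hb0 i (hTS hi)) hj
    have hBTB : ∑ i ∈ T, b i ≤ ∑ i ∈ S, b i :=
      Finset.sum_le_sum_of_subset_of_nonneg hTS (fun i hi _ => hb0 i hi)
    have hjensen := (strictConcaveOn_log_Ioi.concaveOn).le_map_sum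
      (t := T) (w := fun i => a i / A) (p := fun i => b i / a i)
      (fun i hi => div_nonneg (le_of_lt (haT i hi)) (le_of_lt hA))
      (by rw [← Finset.sum_div, hsumT, div_self (ne_of_gt hA)])
      (fun i hi => Set.mem_Ioi.2 (div_pos (lt_of_lt_of_le (haT i hi) (hab i (hTS hi))) (haT i hi)))
    simp only [smul_eq_mul] at hjensen
    have hpt : ∑ i ∈ T, a i / A * (b i / a i) = (∑ i ∈ T, b i) / A := by
      rw [Finset.sum_div]
      refine Finset.sum_congr rfl (fun i hi => ?_)
      have h1 : a i ≠ 0 := ne_of_gt (haT i hi)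
      have h2 : A ≠ 0 := ne_of_gt hA
      field_simp
    rw [hpt] at hjensen
    have hlog : ∑ i ∈ T, a i / A * Real.log (b i / a i) ≤ Real.log ((∑ i ∈ S, b i) / A) := by
      refine le_trans hjensen ?_
      refine Real.log_le_log (div_pos hBT hA) ?_
      gcongr
    have hmul : ∑ i ∈ T, a i * Real.log (b i / a i) ≤ A * Real.log ((∑ i ∈ S, b i) / A) := by
      have := mul_le_mul_of_nonneg_left hlog (le_of_lt hA)
      rw [Finset.mul_sum] at this
      refine le_trans (le_of_eq (Finset.sum_congr rfl fun i hi => ?_)) this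
      field_simp
    have hext : ∑ i ∈ S, a i * Real.log (b i / a i) = ∑ i ∈ T, a i * Real.log (b i / a i) := by
      symm
      apply Finset.sum_subset hTS
      intro i hi hit
      have hai : a i = 0 := by
        by_contra hne
        exact hit (Finset.mem_filter.2 ⟨hi, lt_of_le_of_ne (ha i hi) (Ne.symm hne)⟩)
      simp [hai]
    have hfin : ∑ i ∈ S, a i * Real.log (b i / a i) ≤ A * Real.log ((∑ i ∈ S, b i) / A) := by
      rw [hext]; exact hmul
    have hlog2 : (0:ℝ) < Real.log 2 := Real.log_pos (by norm_num)
    have hL : ∑ i ∈ S, a i * Real.logb 2 (b i / a i)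
        = (∑ i ∈ S, a i * Real.log (b i / a i)) / Real.log 2 := by
      rw [Finset.sum_div]
      exact Finset.sum_congr rfl fun i _ => by rw [Real.logb]; ring
    rw [hL, Real.logb, ← mul_div_assoc]
    gcongr

lemma condH_eq (p : Ω → ℝ) (hp : ∀ ω, 0 ≤ p ω) (f : Ω → α) (g : Ω → β) :
    condH p f g = ∑ x : α × β,
      push p (fun ω => (f ω, g ω)) x *
        Real.logb 2 (push p g x.2 / push p (fun ω => (f ω, g ω)) x) := by
  classical
  set q := push p (fun ω => (f ω, g ω)) with hqdef
  have hq0 : ∀ x, 0 ≤ q x := fun x => push_nonneg hp _ x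
  have hmarg : ∀ b, push p g b = ∑ a, q (a, b) := fun b => push_pair_snd p f g b
  have hle : ∀ a b, q (a,b) ≤ push p g b := by
    intro a b; rw [hmarg b]
    exact Finset.single_le_sum (fun a' _ => hq0 (a', b)) (Finset.mem_univ a)
  unfold condH H ent
  have h2 : ∑ b, push p g b * Real.logb 2 (push p g b)
      = ∑ x : α × β, q x * Real.logb 2 (push p g x.2) := by
    rw [Fintype.sum_prod_type_right]
    refine Finset.sum_congr rfl fun b _ => ?_
    show push p g b * Real.logb 2 (push p g b) = ∑ x : α, q (x, b) * Real.logb 2 (push p g b)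
    rw [← Finset.sum_mul, ← hmarg b]
  rw [← hqdef, h2, neg_sub_neg, ← Finset.sum_sub_distrib]
  refine Finset.sum_congr rfl fun x _ => ?_
  by_cases hx : q x = 0
  · simp [hx]
  · have hxpos : 0 < q x := lt_of_le_of_ne (hq0 x) (Ne.symm hx)
    have hpg : 0 < push p g x.2 := lt_of_lt_of_le hxpos (by
      have := hle x.1 x.2
      simpa using this)
    rw [Real.logb_div (ne_of_gt hpg) (ne_of_gt hxpos)]
    ring

lemma condH_comp_le (p : Ω → ℝ) (hp : ∀ ω, 0 ≤ p ω) (f : Ω → α) (g : Ω → β) (φ : β → γ) :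
    condH p f g ≤ condH p f (fun ω => φ (g ω)) := by
  classical
  rw [condH_eq p hp f g, condH_eq p hp f (fun ω => φ (g ω))]
  set q := push p (fun ω => (f ω, g ω)) with hqdef
  set q' := push p (fun ω => (f ω, φ (g ω))) with hq'def
  have hq0 : ∀ x, 0 ≤ q x := fun x => push_nonneg hp _ x
  have hmargb : ∀ b, push p g b = ∑ a, q (a, b) := fun b => push_pair_snd p f g b
  have hmargc : ∀ cc, push p (fun ω => φ (g ω)) cc = ∑ a, q' (a, cc) :=
    fun cc => push_pair_snd p f (fun ω => φ (g ω)) cc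
  have hq' : ∀ a cc, q' (a, cc) = ∑ b ∈ Finset.univ.filter (fun b => φ b = cc), q (a, b) := by
    intro a cc
    have h1 : q' (a, cc) = push q (fun x : α × β => (x.1, φ x.2)) (a, cc) :=
      push_comp p (fun ω => (f ω, g ω)) (fun x : α × β => (x.1, φ x.2)) (a, cc)
    rw [h1]
    unfold push
    rw [Fintype.sum_prod_type]
    rw [Finset.sum_eq_single a]
    · rw [Finset.sum_filter]
      refine Finset.sum_congr rfl fun b _ => ?_
      simp [Prod.ext_iff]
    · intro a' _ ha'
      apply Finset.sum_eq_zero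
      intro b _
      simp [Prod.ext_iff, ha']
    · simp
  have hmargc' : ∀ cc, push p (fun ω => φ (g ω)) cc
      = ∑ b ∈ Finset.univ.filter (fun b => φ b = cc), push p g b := by
    intro cc
    rw [hmargc cc, Finset.sum_congr rfl (fun a _ => hq' a cc), Finset.sum_comm]
    exact Finset.sum_congr rfl fun b _ => (hmargb b).symm
  rw [Fintype.sum_prod_type, Fintype.sum_prod_type]
  refine Finset.sum_le_sum fun a _ => ?_
  have hfib : ∑ b, q (a, b) * Real.logb 2 (push p g b / q (a, b))
      = ∑ cc, ∑ b ∈ Finset.univ.filter (fun b => φ b = cc),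
          q (a, b) * Real.logb 2 (push p g b / q (a, b)) := by
    rw [Finset.sum_fiberwise_of_maps_to (fun b _ => Finset.mem_univ (φ b))]
  rw [hfib]
  refine Finset.sum_le_sum fun cc _ => ?_
  have hls := logsum (Finset.univ.filter (fun b => φ b = cc)) (fun b => q (a, b))
    (fun b => push p g b)
    (fun b _ => hq0 (a, b))
    (fun b _ => by
      rw [hmargb b]
      exact Finset.single_le_sum (fun a' _ => hq0 (a', b)) (Finset.mem_univ a))
  refine le_trans hls (le_of_eq ?_)
  rw [← hq' a cc, ← hmargc' cc]

lemma markov_fst (p : Ω → ℝ) (f : Ω → α) (g : Ω → β) (h₁ : Ω → γ) (h₂ : Ω → δ)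
    (hM : Markov p f g (fun ω => (h₁ ω, h₂ ω))) : Markov p f g h₁ := by
  intro a b c
  have key : ∀ d, push p (fun ω => (f ω, g ω, h₁ ω, h₂ ω)) (a, b, c, d) * push p g b =
      push p (fun ω => (f ω, g ω)) (a, b) * push p (fun ω => (g ω, h₁ ω, h₂ ω)) (b, c, d) :=
    fun d => hM a b (c, d)
  have e1 : push p (fun ω => (f ω, g ω, h₁ ω)) (a, b, c)
      = ∑ d, push p (fun ω => (f ω, g ω, h₁ ω, h₂ ω)) (a, b, c, d) := by
    rw [push_pair_fst p (fun ω => (f ω, g ω, h₁ ω)) h₂ (a, b, c)]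
    refine Finset.sum_congr rfl fun d _ => ?_
    exact (push_comp_inj_apply p
      (φ := fun x : (α × β × γ) × δ => (x.1.1, x.1.2.1, x.1.2.2, x.2))
      (fun x y hxy => by
        obtain ⟨⟨x1, x2, x3⟩, x4⟩ := x; obtain ⟨⟨y1, y2, y3⟩, y4⟩ := y
        simp_all [Prod.ext_iff])
      (fun ω => ((f ω, g ω, h₁ ω), h₂ ω)) ((a, b, c), d)).symm
  have e2 : push p (fun ω => (g ω, h₁ ω)) (b, c)
      = ∑ d, push p (fun ω => (g ω, h₁ ω, h₂ ω)) (b, c, d) := by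
    rw [push_pair_fst p (fun ω => (g ω, h₁ ω)) h₂ (b, c)]
    refine Finset.sum_congr rfl fun d _ => ?_
    exact (push_comp_inj_apply p
      (φ := fun x : (β × γ) × δ => (x.1.1, x.1.2, x.2))
      (fun x y hxy => by
        obtain ⟨⟨x1, x2⟩, x3⟩ := x; obtain ⟨⟨y1, y2⟩, y3⟩ := y
        simp_all [Prod.ext_iff])
      (fun ω => ((g ω, h₁ ω), h₂ ω)) ((b, c), d)).symm
  rw [e1, e2, Finset.sum_mul, Finset.mul_sum]
  exact Finset.sum_congr rfl fun d _ => key d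

lemma markov_snd (p : Ω → ℝ) (f : Ω → α) (g : Ω → β) (h₁ : Ω → γ) (h₂ : Ω → δ)
    (hM : Markov p f g (fun ω => (h₁ ω, h₂ ω))) : Markov p f g h₂ := by
  intro a b d
  have key : ∀ c, push p (fun ω => (f ω, g ω, h₁ ω, h₂ ω)) (a, b, c, d) * push p g b =
      push p (fun ω => (f ω, g ω)) (a, b) * push p (fun ω => (g ω, h₁ ω, h₂ ω)) (b, c, d) :=
    fun c => hM a b (c, d)
  have e1 : push p (fun ω => (f ω, g ω, h₂ ω)) (a, b, d)
      = ∑ c, push p (fun ω => (f ω, g ω, h₁ ω, h₂ ω)) (a, b, c, d) := by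
    rw [push_pair_fst p (fun ω => (f ω, g ω, h₂ ω)) h₁ (a, b, d)]
    refine Finset.sum_congr rfl fun c _ => ?_
    exact (push_comp_inj_apply p
      (φ := fun x : (α × β × δ) × γ => (x.1.1, x.1.2.1, x.2, x.1.2.2))
      (fun x y hxy => by
        obtain ⟨⟨x1, x2, x3⟩, x4⟩ := x; obtain ⟨⟨y1, y2, y3⟩, y4⟩ := y
        simp_all [Prod.ext_iff])
      (fun ω => ((f ω, g ω, h₂ ω), h₁ ω)) ((a, b, d), c)).symm
  have e2 : push p (fun ω => (g ω, h₂ ω)) (b, d)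
      = ∑ c, push p (fun ω => (g ω, h₁ ω, h₂ ω)) (b, c, d) := by
    rw [push_pair_fst p (fun ω => (g ω, h₂ ω)) h₁ (b, d)]
    refine Finset.sum_congr rfl fun c _ => ?_
    exact (push_comp_inj_apply p
      (φ := fun x : (β × δ) × γ => (x.1.1, x.2, x.1.2))
      (fun x y hxy => by
        obtain ⟨⟨x1, x2⟩, x3⟩ := x; obtain ⟨⟨y1, y2⟩, y3⟩ := y
        simp_all [Prod.ext_iff])
      (fun ω => ((g ω, h₂ ω), h₁ ω)) ((b, d), c)).symm
  rw [e1, e2, Finset.sum_mul, Finset.mul_sum]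
  exact Finset.sum_congr rfl fun c _ => key c

lemma markov_ent (p : Ω → ℝ) (hp : ∀ ω, 0 ≤ p ω) (f : Ω → α) (g : Ω → β) (h : Ω → γ)
    (hM : Markov p f g h) :
    H p (fun ω => (f ω, g ω, h ω)) + H p g
      = H p (fun ω => (f ω, g ω)) + H p (fun ω => (g ω, h ω)) := by
  classical
  set A : α × β × γ → ℝ := push p (fun ω => (f ω, g ω, h ω)) with hAdef
  have hA0 : ∀ x, 0 ≤ A x := fun x => push_nonneg hp _ x
  have hfg : ∀ a b, push p (fun ω => (f ω, g ω)) (a, b) = ∑ c, A (a, b, c) := by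
    intro a b
    rw [push_pair_fst p (fun ω => (f ω, g ω)) h (a, b)]
    refine Finset.sum_congr rfl fun c _ => ?_
    exact (push_comp_inj_apply p
      (φ := fun x : (α × β) × γ => (x.1.1, x.1.2, x.2))
      (fun x y hxy => by
        obtain ⟨⟨x1, x2⟩, x3⟩ := x; obtain ⟨⟨y1, y2⟩, y3⟩ := y
        simp_all [Prod.ext_iff])
      (fun ω => ((f ω, g ω), h ω)) ((a, b), c)).symm
  have hgh : ∀ b c, push p (fun ω => (g ω, h ω)) (b, c) = ∑ a, A (a, b, c) :=
    fun b c => push_pair_snd p f (fun ω => (g ω, h ω)) (b, c)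
  have hg : ∀ b, push p g b = ∑ a, ∑ c, A (a, b, c) := by
    intro b
    rw [push_pair_snd p f g b]
    exact Finset.sum_congr rfl fun a _ => hfg a b
  have hposfg : ∀ a b c, 0 < A (a, b, c) → 0 < push p (fun ω => (f ω, g ω)) (a, b) := by
    intro a b c hpos
    rw [hfg a b]
    exact lt_of_lt_of_le hpos (Finset.single_le_sum (fun c' _ => hA0 (a, b, c')) (Finset.mem_univ c))
  have hposgh : ∀ a b c, 0 < A (a, b, c) → 0 < push p (fun ω => (g ω, h ω)) (b, c) := by
    intro a b c hpos
    rw [hgh b c]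
    exact lt_of_lt_of_le hpos (Finset.single_le_sum (fun a' _ => hA0 (a', b, c)) (Finset.mem_univ a))
  have hposg : ∀ a b c, 0 < A (a, b, c) → 0 < push p g b := by
    intro a b c hpos
    rw [hg b]
    refine lt_of_lt_of_le (lt_of_lt_of_le hpos
      (Finset.single_le_sum (fun c' _ => hA0 (a, b, c')) (Finset.mem_univ c))) ?_
    exact Finset.single_le_sum (fun a' _ => Finset.sum_nonneg fun c' _ => hA0 (a', b, c'))
      (Finset.mem_univ a)
  have key : ∀ a b c,
      A (a, b, c) * Real.logb 2 (push p (fun ω => (f ω, g ω)) (a, b))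
        + A (a, b, c) * Real.logb 2 (push p (fun ω => (g ω, h ω)) (b, c))
      = A (a, b, c) * Real.logb 2 (A (a, b, c)) + A (a, b, c) * Real.logb 2 (push p g b) := by
    intro a b c
    by_cases hz : A (a, b, c) = 0
    · simp [hz]
    · have hpos : 0 < A (a, b, c) := lt_of_le_of_ne (hA0 _) (Ne.symm hz)
      have h1 := hposfg a b c hpos
      have h2 := hposgh a b c hpos
      have h3 := hposg a b c hpos
      have hlog : Real.logb 2 (push p (fun ω => (f ω, g ω)) (a, b))
            + Real.logb 2 (push p (fun ω => (g ω, h ω)) (b, c))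
          = Real.logb 2 (A (a, b, c)) + Real.logb 2 (push p g b) := by
        rw [← Real.logb_mul (ne_of_gt h1) (ne_of_gt h2),
          ← Real.logb_mul (ne_of_gt hpos) (ne_of_gt h3)]
        rw [← hM a b c]
      calc A (a, b, c) * Real.logb 2 (push p (fun ω => (f ω, g ω)) (a, b))
            + A (a, b, c) * Real.logb 2 (push p (fun ω => (g ω, h ω)) (b, c))
          = A (a, b, c) * (Real.logb 2 (push p (fun ω => (f ω, g ω)) (a, b))
              + Real.logb 2 (push p (fun ω => (g ω, h ω)) (b, c))) := by ring
        _ = A (a, b, c) * (Real.logb 2 (A (a, b, c)) + Real.logb 2 (push p g b)) := by rw [hlog]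
        _ = _ := by ring
  unfold H ent
  rw [← hAdef]
  have S1 : ∑ x : α × β × γ, A x * Real.logb 2 (A x)
      = ∑ a, ∑ b, ∑ c, A (a, b, c) * Real.logb 2 (A (a, b, c)) := by
    rw [Fintype.sum_prod_type]
    exact Finset.sum_congr rfl fun a _ => by rw [Fintype.sum_prod_type]
  have S2 : ∑ b, push p g b * Real.logb 2 (push p g b)
      = ∑ a, ∑ b, ∑ c, A (a, b, c) * Real.logb 2 (push p g b) := by
    rw [Finset.sum_comm]
    refine Finset.sum_congr rfl fun b _ => ?_
    show push p g b * Real.logb 2 (push p g b) = ∑ a, ∑ c, A (a, b, c) * Real.logb 2 (push p g b)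
    rw [Finset.sum_congr rfl fun a (_ : a ∈ Finset.univ) =>
      (Finset.sum_mul Finset.univ (fun c => A (a, b, c)) (Real.logb 2 (push p g b))).symm,
      ← Finset.sum_mul, ← hg b]
  have S3 : ∑ x : α × β, push p (fun ω => (f ω, g ω)) x
        * Real.logb 2 (push p (fun ω => (f ω, g ω)) x)
      = ∑ a, ∑ b, ∑ c, A (a, b, c) * Real.logb 2 (push p (fun ω => (f ω, g ω)) (a, b)) := by
    rw [Fintype.sum_prod_type]
    refine Finset.sum_congr rfl fun a _ => Finset.sum_congr rfl fun b _ => ?_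
    rw [← Finset.sum_mul, ← hfg a b]
  have S4 : ∑ x : β × γ, push p (fun ω => (g ω, h ω)) x
        * Real.logb 2 (push p (fun ω => (g ω, h ω)) x)
      = ∑ a, ∑ b, ∑ c, A (a, b, c) * Real.logb 2 (push p (fun ω => (g ω, h ω)) (b, c)) := by
    rw [Fintype.sum_prod_type]
    rw [show ∑ a, ∑ b, ∑ c, A (a, b, c) * Real.logb 2 (push p (fun ω => (g ω, h ω)) (b, c))
        = ∑ b, ∑ c, ∑ a, A (a, b, c) * Real.logb 2 (push p (fun ω => (g ω, h ω)) (b, c)) from by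
      rw [Finset.sum_comm]
      exact Finset.sum_congr rfl fun b _ => Finset.sum_comm]
    refine Finset.sum_congr rfl fun b _ => Finset.sum_congr rfl fun c _ => ?_
    rw [← Finset.sum_mul, ← hgh b c]
  rw [S1, S2, S3, S4]
  rw [← neg_add, ← neg_add, neg_inj]
  rw [← Finset.sum_add_distrib, ← Finset.sum_add_distrib]
  refine Finset.sum_congr rfl fun a _ => ?_
  rw [← Finset.sum_add_distrib, ← Finset.sum_add_distrib]
  refine Finset.sum_congr rfl fun b _ => ?_
  rw [← Finset.sum_add_distrib, ← Finset.sum_add_distrib]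
  exact Finset.sum_congr rfl fun c _ => (key a b c).symm

lemma cmi_eq (p : Ω → ℝ) (f : Ω → α) (g : Ω → β) (h : Ω → γ) :
    cmi p f g h = H p (fun ω => (f ω, h ω)) + H p (fun ω => (g ω, h ω))
      - H p (fun ω => ((f ω, g ω), h ω)) - H p h := by
  unfold cmi condH
  ring

end Lemmas

/-- Lemma 3 of the paper: if `W − U − Z` and `U − W − (V,Z)` are Markov
chains, and `U₀` is the zero-information variable of `W` w.r.t. `P_{Z|W}`, then
`I(W;V|U) ≤ I(W;V|U₀)`. -/
theorem zero_info_maximal {Ω W U V Z : Type*}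
    [Fintype Ω] [Fintype W] [Fintype U] [Fintype V] [Fintype Z]
    (p : Ω → ℝ) (hp : IsProb p)
    (fW : Ω → W) (fU : Ω → U) (fV : Ω → V) (fZ : Ω → Z)
    (hWUZ : Markov p fW fU fZ)
    (hUWVZ : Markov p fU fW (fun ω => (fV ω, fZ ω)))
    (c : W → Z → ℝ)
    (hc : ∀ w z, c w z = push p (fun ω => (fW ω, fZ ω)) (w, z) / push p fW w) :
    cmi p fW fV fU ≤
      cmi p fW fV (fun ω => Quotient.mk (zeroInfoSetoid c) (fW ω)) := by
  classical
  obtain ⟨hp0, hp1⟩ := hp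
  have hΩ : Nonempty Ω := by
    by_contra hcon
    rw [not_nonempty_iff] at hcon
    rw [Finset.univ_eq_empty, Finset.sum_empty] at hp1
    exact absurd hp1 (by norm_num)
  obtain ⟨ω₀⟩ := hΩ
  -- marginal Markov chains
  have hMUWV : Markov p fU fW fV := markov_fst p fU fW fV fZ hUWVZ
  have hMUWZ : Markov p fU fW fZ := markov_snd p fU fW fV fZ hUWVZ
  -- the key fact: conditionally on pWU(w,u) > 0, c w is determined by u
  have claim : ∀ w u, 0 < push p (fun ω => (fW ω, fU ω)) (w, u) → ∀ z,
      c w z = push p (fun ω => (fU ω, fZ ω)) (u, z) / push p fU u := by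
    intro w u hpos z
    have hPW : 0 < push p fW w := by
      rw [push_pair_fst p fW fU w]
      exact lt_of_lt_of_le hpos
        (Finset.single_le_sum (fun u' _ => push_nonneg hp0 _ _) (Finset.mem_univ u))
    have hPU : 0 < push p fU u := by
      rw [push_pair_snd p fW fU u]
      exact lt_of_lt_of_le hpos
        (Finset.single_le_sum (f := fun w' => push p (fun ω => (fW ω, fU ω)) (w', u))
          (fun w' _ => push_nonneg hp0 _ _) (Finset.mem_univ w))
    have hii := hWUZ w u z
    have hi := hMUWZ u w z
    have e1 : push p (fun ω => (fU ω, fW ω, fZ ω)) (u, w, z)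
        = push p (fun ω => (fW ω, fU ω, fZ ω)) (w, u, z) :=
      push_comp_inj_apply p
        (φ := fun x : W × U × Z => (x.2.1, x.1, x.2.2))
        (fun x y hxy => by
          obtain ⟨x1, x2, x3⟩ := x; obtain ⟨y1, y2, y3⟩ := y
          simp_all [Prod.ext_iff])
        (fun ω => (fW ω, fU ω, fZ ω)) (w, u, z)
    have e2 : push p (fun ω => (fU ω, fW ω)) (u, w)
        = push p (fun ω => (fW ω, fU ω)) (w, u) :=
      push_comp_inj_apply p (φ := (Prod.swap : W × U → U × W))
        Prod.swap_injective (fun ω => (fW ω, fU ω)) (w, u)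
    rw [e1, e2] at hi
    have hkey : push p (fun ω => (fW ω, fZ ω)) (w, z) * push p fU u
        = push p (fun ω => (fU ω, fZ ω)) (u, z) * push p fW w := by
      have hc2 : push p (fun ω => (fW ω, fU ω)) (w, u)
          * (push p (fun ω => (fW ω, fZ ω)) (w, z) * push p fU u)
          = push p (fun ω => (fW ω, fU ω)) (w, u)
          * (push p (fun ω => (fU ω, fZ ω)) (u, z) * push p fW w) := by
        calc push p (fun ω => (fW ω, fU ω)) (w, u)
              * (push p (fun ω => (fW ω, fZ ω)) (w, z) * push p fU u)
            = (push p (fun ω => (fW ω, fU ω)) (w, u)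
              * push p (fun ω => (fW ω, fZ ω)) (w, z)) * push p fU u := by ring
          _ = (push p (fun ω => (fW ω, fU ω, fZ ω)) (w, u, z) * push p fW w) * push p fU u := by
              rw [← hi]
          _ = (push p (fun ω => (fW ω, fU ω, fZ ω)) (w, u, z) * push p fU u) * push p fW w := by
              ring
          _ = (push p (fun ω => (fW ω, fU ω)) (w, u)
              * push p (fun ω => (fU ω, fZ ω)) (u, z)) * push p fW w := by rw [hii]
          _ = _ := by ring
      exact mul_left_cancel₀ (ne_of_gt hpos) hc2
    rw [hc w z, div_eq_div_iff (ne_of_gt hPW) (ne_of_gt hPU)]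
    exact hkey
  -- construct g : U → Quotient with U₀ = g ∘ fU a.e.
  set g : U → Quotient (zeroInfoSetoid c) := fun u =>
    if h : ∃ w, 0 < push p (fun ω => (fW ω, fU ω)) (w, u)
    then Quotient.mk (zeroInfoSetoid c) h.choose
    else Quotient.mk (zeroInfoSetoid c) (fW ω₀) with hgdef
  have hae : ∀ ω, p ω ≠ 0 →
      Quotient.mk (zeroInfoSetoid c) (fW ω) = g (fU ω) := by
    intro ω hω
    have hpω : 0 < p ω := lt_of_le_of_ne (hp0 ω) (Ne.symm hω)
    have hpos : 0 < push p (fun ω' => (fW ω', fU ω')) (fW ω, fU ω) :=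
      lt_of_lt_of_le hpω (le_push hp0 (fun ω' => (fW ω', fU ω')) ω)
    have hex : ∃ w, 0 < push p (fun ω' => (fW ω', fU ω')) (w, fU ω) := ⟨fW ω, hpos⟩
    rw [hgdef]
    simp only [dif_pos hex]
    apply Quotient.sound
    intro z
    rw [claim (fW ω) (fU ω) hpos z, claim hex.choose (fU ω) hex.choose_spec z]
  -- reorderings via injections
  have r1 : H p (fun ω => ((fW ω, fV ω), fU ω)) = H p (fun ω => (fU ω, fW ω, fV ω)) :=
    H_comp_inj p (φ := fun x : U × W × V => ((x.2.1, x.2.2), x.1))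
      (fun x y hxy => by
        obtain ⟨x1, x2, x3⟩ := x; obtain ⟨y1, y2, y3⟩ := y
        simp_all [Prod.ext_iff])
      (fun ω => (fU ω, fW ω, fV ω))
  have r2 : H p (fun ω => (fU ω, fW ω)) = H p (fun ω => (fW ω, fU ω)) :=
    H_comp_inj p (φ := (Prod.swap : W × U → U × W)) Prod.swap_injective
      (fun ω => (fW ω, fU ω))
  have r3 : H p (fun ω => (fW ω, Quotient.mk (zeroInfoSetoid c) (fW ω))) = H p fW :=
    H_comp_inj p (φ := fun w : W => (w, Quotient.mk (zeroInfoSetoid c) w))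
      (fun x y hxy => congrArg Prod.fst hxy) fW
  have r4 : H p (fun ω => ((fW ω, fV ω), Quotient.mk (zeroInfoSetoid c) (fW ω)))
      = H p (fun ω => (fW ω, fV ω)) :=
    H_comp_inj p (φ := fun x : W × V => (x, Quotient.mk (zeroInfoSetoid c) x.1))
      (fun x y hxy => congrArg Prod.fst hxy) (fun ω => (fW ω, fV ω))
  -- Markov entropy identity for U − W − V
  have ent_id := markov_ent p hp0 fU fW fV hMUWV
  -- main conditional entropy inequality
  have hmain : condH p fV fU ≤ condH p fV (fun ω => Quotient.mk (zeroInfoSetoid c) (fW ω)) := by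
    have h1 : condH p fV (fun ω => Quotient.mk (zeroInfoSetoid c) (fW ω))
        = condH p fV (fun ω => g (fU ω)) := by
      unfold condH H
      rw [push_congr (p := p) (f := fun ω => (fV ω, Quotient.mk (zeroInfoSetoid c) (fW ω)))
          (g := fun ω => (fV ω, g (fU ω))) (fun ω hω => by rw [hae ω hω]),
        push_congr (p := p) (f := fun ω => Quotient.mk (zeroInfoSetoid c) (fW ω))
          (g := fun ω => g (fU ω)) hae]
    rw [h1]
    exact condH_comp_le p hp0 fV fU g
  -- assemble
  rw [cmi_eq, cmi_eq, r3, r4]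
  unfold condH at hmain
  linarith [r1, r2, ent_id, hmain]
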